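/- Let & be a continuous t-norm on [0,1] with residuation →. For every a ∈ (0,1] and every ε > 0 there exists δ > 0 such that ((a+δ) → (a−δ)) & (c−δ) ≥ c − ε for all c ∈ [0,a]. -/
import Mathlib

noncomputable def tres (f : ℝ → ℝ → ℝ) (x y : ℝ) : ℝ :=
  sSup {z | z ∈ Set.Icc (0:ℝ) 1 ∧ f x z ≤ y}

def IsContTNorm (f : ℝ → ℝ → ℝ) : Prop :=
  (∀ a ∈ Set.Icc (0:ℝ) 1, ∀ b ∈ Set.Icc (0:ℝ) 1, f a b ∈ Set.Icc (0:ℝ) 1) ∧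
  ContinuousOn (fun p : ℝ × ℝ => f p.1 p.2) (Set.Icc 0 1 ×ˢ Set.Icc 0 1) ∧
  (∀ a ∈ Set.Icc (0:ℝ) 1, ∀ b ∈ Set.Icc (0:ℝ) 1, f a b = f b a) ∧
  (∀ a ∈ Set.Icc (0:ℝ) 1, ∀ b ∈ Set.Icc (0:ℝ) 1, ∀ c ∈ Set.Icc (0:ℝ) 1,
    f (f a b) c = f a (f b c)) ∧
  (∀ a ∈ Set.Icc (0:ℝ) 1, ∀ b ∈ Set.Icc (0:ℝ) 1, ∀ c ∈ Set.Icc (0:ℝ) 1,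
    a ≤ b → f a c ≤ f b c) ∧
  (∀ a ∈ Set.Icc (0:ℝ) 1, f a 1 = a)

namespace Stmt5Aux

variable {f : ℝ → ℝ → ℝ}

lemma contOn_snd (ht : IsContTNorm f) (x : ℝ) (hx : x ∈ Set.Icc (0:ℝ) 1) :
    ContinuousOn (fun z => f x z) (Set.Icc 0 1) := by
  have h := ht.2.1
  exact h.comp ((continuous_const.prodMk continuous_id).continuousOn)
    (fun z hz => ⟨hx, hz⟩)

lemma contOn_fst (ht : IsContTNorm f) (y : ℝ) (hy : y ∈ Set.Icc (0:ℝ) 1) :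
    ContinuousOn (fun z => f z y) (Set.Icc 0 1) := by
  have h := ht.2.1
  exact h.comp ((continuous_id.prodMk continuous_const).continuousOn)
    (fun z hz => ⟨hz, hy⟩)

lemma fzero (ht : IsContTNorm f) (x : ℝ) (hx : x ∈ Set.Icc (0:ℝ) 1) : f x 0 = 0 := by
  obtain ⟨hmem, _, hcomm, _, hmono, hone⟩ := ht
  have h01 : (0:ℝ) ∈ Set.Icc (0:ℝ) 1 := ⟨le_refl 0, zero_le_one⟩
  have h11 : (1:ℝ) ∈ Set.Icc (0:ℝ) 1 := ⟨zero_le_one, le_refl 1⟩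
  have h1 : f x 0 ≤ f 1 0 := hmono x hx 1 h11 0 h01 hx.2
  have h2 : f 1 0 = 0 := by rw [hcomm 1 h11 0 h01, hone 0 h01]
  exact le_antisymm (le_trans h1 (le_of_eq h2)) (hmem x hx 0 h01).1

lemma tendsto_f (ht : IsContTNorm f) {u v : ℕ → ℝ} {x y : ℝ}
    (hu : ∀ n, u n ∈ Set.Icc (0:ℝ) 1) (hv : ∀ n, v n ∈ Set.Icc (0:ℝ) 1)
    (hx : x ∈ Set.Icc (0:ℝ) 1) (hy : y ∈ Set.Icc (0:ℝ) 1)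
    (htu : Filter.Tendsto u Filter.atTop (nhds x))
    (htv : Filter.Tendsto v Filter.atTop (nhds y)) :
    Filter.Tendsto (fun n => f (u n) (v n)) Filter.atTop (nhds (f x y)) := by
  have hc : ContinuousWithinAt (fun p : ℝ × ℝ => f p.1 p.2)
      (Set.Icc 0 1 ×ˢ Set.Icc 0 1) (x, y) := ht.2.1 (x, y) ⟨hx, hy⟩
  have hp : Filter.Tendsto (fun n => (u n, v n)) Filter.atTop
      (nhdsWithin (x, y) (Set.Icc 0 1 ×ˢ Set.Icc 0 1)) := by
    apply tendsto_nhdsWithin_of_tendsto_nhds_of_eventually_within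
    · exact htu.prodMk_nhds htv
    · exact Filter.Eventually.of_forall (fun n => ⟨hu n, hv n⟩)
  exact hc.tendsto.comp hp

lemma resid (ht : IsContTNorm f) {x y : ℝ} (hy0 : 0 ≤ y) (hyx : y ≤ x) (hx1 : x ≤ 1) :
    tres f x y ∈ Set.Icc (0:ℝ) 1 ∧ f x (tres f x y) = y := by
  obtain ⟨hmem, hcont, hcomm, hassoc, hmono, hone⟩ := ht
  have hx : x ∈ Set.Icc (0:ℝ) 1 := ⟨le_trans hy0 hyx, hx1⟩
  have hg : ContinuousOn (fun z => f x z) (Set.Icc 0 1) :=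
    contOn_snd ⟨hmem, hcont, hcomm, hassoc, hmono, hone⟩ x hx
  set S := {z | z ∈ Set.Icc (0:ℝ) 1 ∧ f x z ≤ y} with hS
  have hSeq : S = Set.Icc (0:ℝ) 1 ∩ (fun z => f x z) ⁻¹' (Set.Iic y) := by
    rfl
  have hclosed : IsClosed S := by
    rw [hSeq]
    exact hg.preimage_isClosed_of_isClosed isClosed_Icc isClosed_Iic
  have hf0 : f x 0 = 0 := fzero ⟨hmem, hcont, hcomm, hassoc, hmono, hone⟩ x hx
  have h0S : (0:ℝ) ∈ S := ⟨⟨le_refl 0, zero_le_one⟩, by simpa [hf0] using hy0⟩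
  have hsub : S ⊆ Set.Icc (0:ℝ) 1 := fun z hz => hz.1
  have hcomp : IsCompact S := isCompact_Icc.of_isClosed_subset hclosed hsub
  have hrS : sSup S ∈ S := hcomp.sSup_mem ⟨0, h0S⟩
  have hr : tres f x y ∈ Set.Icc (0:ℝ) 1 := hrS.1
  refine ⟨hr, le_antisymm hrS.2 ?_⟩
  -- IVT to get z with f x z = y
  have hf1 : f x 1 = x := hone x hx
  have hiv : Set.Icc (f x 0) (f x 1) ⊆ (fun z => f x z) '' Set.Icc 0 1 :=
    intermediate_value_Icc zero_le_one hg
  obtain ⟨z, hz, hfz⟩ := hiv (by rw [hf0, hf1]; exact ⟨hy0, hyx⟩)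
  have hzS : z ∈ S := ⟨hz, le_of_eq hfz⟩
  have hzr : z ≤ sSup S := le_csSup (hcomp.bddAbove) hzS
  have : f x z ≤ f x (sSup S) := by
    rw [hcomm x hx z hz, hcomm x hx (sSup S) hr]
    exact hmono z hz (sSup S) hr x hx hzr
  have hfz' : f x z = y := hfz
  exact le_trans (le_of_eq hfz'.symm) this

end Stmt5Aux

theorem stmt5 (f : ℝ → ℝ → ℝ) (ht : IsContTNorm f) (a : ℝ) (ha : a ∈ Set.Ioc (0:ℝ) 1) :
    ∀ ε > (0:ℝ), ∃ δ > (0:ℝ), ∀ c ∈ Set.Icc (0:ℝ) a,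
      c - ε ≤ f (tres f (min (a + δ) 1) (max (a - δ) 0)) (max (c - δ) 0) := by
  intro ε hε
  by_contra hcon
  push_neg at hcon
  obtain ⟨ha0, ha1⟩ := ha
  have haI : a ∈ Set.Icc (0:ℝ) 1 := ⟨le_of_lt ha0, ha1⟩
  -- sequence of deltas
  set δs : ℕ → ℝ := fun n => 1 / (n + 1) with hδs
  have hδpos : ∀ n, 0 < δs n := fun n => by positivity
  have hδ0 : Filter.Tendsto δs Filter.atTop (nhds 0) :=
    tendsto_one_div_add_atTop_nhds_zero_nat
  -- bounds for x_n = min (a + δ) 1 and y_n = max (a - δ) 0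
  set xs : ℕ → ℝ := fun n => min (a + δs n) 1 with hxs
  set ys : ℕ → ℝ := fun n => max (a - δs n) 0 with hys
  have hy0 : ∀ n, 0 ≤ ys n := fun n => le_max_right _ _
  have hyx : ∀ n, ys n ≤ xs n := by
    intro n
    apply max_le
    · exact le_min (by linarith [hδpos n]) (by linarith [hδpos n])
    · exact le_min (by linarith [hδpos n]) zero_le_one
  have hx1 : ∀ n, xs n ≤ 1 := fun n => min_le_right _ _
  set rs : ℕ → ℝ := fun n => tres f (xs n) (ys n) with hrs
  have hres : ∀ n, rs n ∈ Set.Icc (0:ℝ) 1 ∧ f (xs n) (rs n) = ys n :=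
    fun n => Stmt5Aux.resid ht (hy0 n) (hyx n) (hx1 n)
  -- choose bad points
  choose cs hcs hbad using fun n => hcon (δs n) (hδpos n)
  -- extract convergent subsequences
  obtain ⟨c, hcI, φ, hφ, hcφ⟩ :=
    (isCompact_Icc : IsCompact (Set.Icc (0:ℝ) a)).tendsto_subseq hcs
  obtain ⟨r, hrI, ψ, hψ, hrψ⟩ :=
    (isCompact_Icc : IsCompact (Set.Icc (0:ℝ) 1)).tendsto_subseq
      (fun n => (hres (φ n)).1)
  set θ : ℕ → ℕ := φ ∘ ψ with hθ
  have hθmono : StrictMono θ := hφ.comp hψ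
  have hδθ : Filter.Tendsto (fun n => δs (θ n)) Filter.atTop (nhds 0) :=
    hδ0.comp hθmono.tendsto_atTop
  have hcθ : Filter.Tendsto (fun n => cs (θ n)) Filter.atTop (nhds c) :=
    hcφ.comp hψ.tendsto_atTop
  have hrθ : Filter.Tendsto (fun n => rs (θ n)) Filter.atTop (nhds r) := hrψ
  -- limits of xs, ys along θ
  have hxθ : Filter.Tendsto (fun n => xs (θ n)) Filter.atTop (nhds a) := by
    have : Filter.Tendsto (fun n => min (a + δs (θ n)) 1) Filter.atTop
        (nhds (min (a + 0) 1)) :=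
      Filter.Tendsto.min (tendsto_const_nhds.add hδθ) tendsto_const_nhds
    simpa [min_eq_left ha1] using this
  have hyθ : Filter.Tendsto (fun n => ys (θ n)) Filter.atTop (nhds a) := by
    have : Filter.Tendsto (fun n => max (a - δs (θ n)) 0) Filter.atTop
        (nhds (max (a - 0) 0)) :=
      Filter.Tendsto.max (tendsto_const_nhds.sub hδθ) tendsto_const_nhds
    simpa [max_eq_left (le_of_lt ha0)] using this
  have hxI : ∀ n, xs n ∈ Set.Icc (0:ℝ) 1 :=
    fun n => ⟨le_trans (hy0 n) (hyx n), hx1 n⟩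
  have hyI : ∀ n, ys n ∈ Set.Icc (0:ℝ) 1 :=
    fun n => ⟨hy0 n, le_trans (hyx n) (hx1 n)⟩
  -- f a r = a
  have har : f a r = a := by
    have h1 : Filter.Tendsto (fun n => f (xs (θ n)) (rs (θ n))) Filter.atTop
        (nhds (f a r)) :=
      Stmt5Aux.tendsto_f ht (fun n => hxI (θ n)) (fun n => (hres (θ n)).1)
        haI hrI hxθ hrθ
    have h2 : Filter.Tendsto (fun n => f (xs (θ n)) (rs (θ n))) Filter.atTop
        (nhds a) := by
      have := hyθ
      simpa [(hres _).2] using this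
    exact tendsto_nhds_unique h1 h2
  -- limit of truncated c - δ
  have hcI' : c ∈ Set.Icc (0:ℝ) 1 := ⟨hcI.1, le_trans hcI.2 ha1⟩
  set ms : ℕ → ℝ := fun n => max (cs n - δs n) 0 with hms
  have hmI : ∀ n, ms n ∈ Set.Icc (0:ℝ) 1 := by
    intro n
    refine ⟨le_max_right _ _, max_le ?_ zero_le_one⟩
    have := (hcs n).2
    linarith [hδpos n, ha1]
  have hmθ : Filter.Tendsto (fun n => ms (θ n)) Filter.atTop (nhds c) := by
    have : Filter.Tendsto (fun n => max (cs (θ n) - δs (θ n)) 0) Filter.atTop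
        (nhds (max (c - 0) 0)) :=
      Filter.Tendsto.max (hcθ.sub hδθ) tendsto_const_nhds
    simpa [max_eq_left hcI.1] using this
  -- f r c ≤ c - ε
  have hfrc : f r c ≤ c - ε := by
    have h1 : Filter.Tendsto (fun n => f (rs (θ n)) (ms (θ n))) Filter.atTop
        (nhds (f r c)) :=
      Stmt5Aux.tendsto_f ht (fun n => (hres (θ n)).1) (fun n => hmI (θ n))
        hrI hcI' hrθ hmθ
    have h2 : Filter.Tendsto (fun n => cs (θ n) - ε) Filter.atTop
        (nhds (c - ε)) := hcθ.sub tendsto_const_nhds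
    exact le_of_tendsto_of_tendsto' h1 h2
      (fun n => le_of_lt (hbad (θ n)))
  -- now derive contradiction using the idempotent s = lim rⁿ
  obtain ⟨hmem, hcont, hcomm, hassoc, hmono, hone⟩ := ht
  have ht' : IsContTNorm f := ⟨hmem, hcont, hcomm, hassoc, hmono, hone⟩
  have h1I : (1:ℝ) ∈ Set.Icc (0:ℝ) 1 := ⟨zero_le_one, le_refl 1⟩
  set P : ℕ → ℝ := fun n => (fun q => f r q)^[n] 1 with hP
  have hPsucc : ∀ n, P (n + 1) = f r (P n) := by
    intro n
    simp [hP, Function.iterate_succ_apply']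
  have hPmem : ∀ n, P n ∈ Set.Icc (0:ℝ) 1 := by
    intro n
    induction n with
    | zero => exact h1I
    | succ n ih => rw [hPsucc]; exact hmem r hrI _ ih
  have hPanti : ∀ n, P (n + 1) ≤ P n := by
    intro n
    rw [hPsucc]
    calc f r (P n) ≤ f 1 (P n) := hmono r hrI 1 h1I _ (hPmem n) hrI.2
      _ = P n := by rw [hcomm 1 h1I _ (hPmem n), hone _ (hPmem n)]
  have hPanti' : Antitone P := antitone_nat_of_succ_le hPanti
  have hfaP : ∀ n, f a (P n) = a := by
    intro n
    induction n with
    | zero => exact hone a haI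
    | succ n ih =>
        rw [hPsucc, ← hassoc a haI r hrI _ (hPmem n), har, ih]
  have hbdd : BddBelow (Set.range P) := by
    refine ⟨0, ?_⟩
    rintro x ⟨n, rfl⟩
    exact (hPmem n).1
  set s := ⨅ n, P n with hs
  have hPs : Filter.Tendsto P Filter.atTop (nhds s) :=
    tendsto_atTop_ciInf hPanti' hbdd
  have hsI : s ∈ Set.Icc (0:ℝ) 1 :=
    isClosed_Icc.mem_of_tendsto hPs (Filter.Eventually.of_forall hPmem)
  have hfas : f a s = a := by
    have h1 : Filter.Tendsto (fun n => f a (P n)) Filter.atTop (nhds (f a s)) :=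
      Stmt5Aux.tendsto_f ht' (fun _ => haI) hPmem haI hsI tendsto_const_nhds hPs
    have h2 : Filter.Tendsto (fun n => f a (P n)) Filter.atTop (nhds a) := by
      simpa [hfaP] using (tendsto_const_nhds : Filter.Tendsto (fun _ : ℕ => a)
        Filter.atTop (nhds a))
    exact tendsto_nhds_unique h1 h2
  have hrs' : f r s = s := by
    have h1 : Filter.Tendsto (fun n => f r (P n)) Filter.atTop (nhds (f r s)) :=
      Stmt5Aux.tendsto_f ht' (fun _ => hrI) hPmem hrI hsI tendsto_const_nhds hPs
    have h2 : Filter.Tendsto (fun n => f r (P n)) Filter.atTop (nhds s) := by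
      have h := hPs.comp (Filter.tendsto_add_atTop_nat 1)
      have heq : (fun n => f r (P n)) = P ∘ fun n => n + 1 := by
        funext n
        rw [Function.comp_apply, hPsucc]
      rw [heq]
      exact h
    exact tendsto_nhds_unique h1 h2
  have hPss : ∀ n, f (P n) s = s := by
    intro n
    induction n with
    | zero =>
        show f 1 s = s
        rw [hcomm 1 h1I s hsI, hone s hsI]
    | succ n ih =>
        rw [hPsucc, hcomm r hrI _ (hPmem n), hassoc _ (hPmem n) r hrI s hsI,
          hrs', ih]
  have hss : f s s = s := by
    have h1 : Filter.Tendsto (fun n => f (P n) s) Filter.atTop (nhds (f s s)) :=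
      Stmt5Aux.tendsto_f ht' hPmem (fun _ => hsI) hsI hsI hPs tendsto_const_nhds
    have h2 : Filter.Tendsto (fun n => f (P n) s) Filter.atTop (nhds s) := by
      simpa [hPss] using (tendsto_const_nhds : Filter.Tendsto (fun _ : ℕ => s)
        Filter.atTop (nhds s))
    exact tendsto_nhds_unique h1 h2
  have has : a ≤ s := by
    calc a = f a s := hfas.symm
      _ ≤ f 1 s := hmono a haI 1 h1I s hsI haI.2
      _ = s := by rw [hcomm 1 h1I s hsI, hone s hsI]
  have hsr : s ≤ r := by
    have h1 : s ≤ P 1 := ciInf_le hbdd 1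
    have h2 : P 1 = r := by
      rw [hPsucc 0]
      show f r 1 = r
      exact hone r hrI
    linarith
  -- f c s = c via IVT
  have hcs' : f c s = c := by
    have hg : ContinuousOn (fun t => f t s) (Set.Icc 0 1) :=
      Stmt5Aux.contOn_fst ht' s hsI
    have hg' : ContinuousOn (fun t => f t s) (Set.Icc 0 s) :=
      hg.mono (Set.Icc_subset_Icc (le_refl 0) hsI.2)
    have h0 : f 0 s = 0 := by
      rw [hcomm 0 ⟨le_refl 0, zero_le_one⟩ s hsI]
      exact Stmt5Aux.fzero ht' s hsI
    have hiv : Set.Icc (f 0 s) (f s s) ⊆ (fun t => f t s) '' Set.Icc 0 s :=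
      intermediate_value_Icc hsI.1 hg'
    obtain ⟨t, htm, hft⟩ := hiv (by rw [h0, hss]; exact ⟨hcI.1, le_trans hcI.2 has⟩)
    have htI : t ∈ Set.Icc (0:ℝ) 1 := ⟨htm.1, le_trans htm.2 hsI.2⟩
    have hft' : f t s = c := hft
    calc f c s = f (f t s) s := by rw [hft']
      _ = f t (f s s) := hassoc t htI s hsI s hsI
      _ = f t s := by rw [hss]
      _ = c := hft'
  -- contradiction
  have hfin : c ≤ f r c := by
    calc c = f c s := hcs'.symm
      _ = f s c := hcomm c hcI' s hsI
      _ ≤ f r c := hmono s hsI r hrI c hcI' hsr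
  linarith
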